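/- Let B₁, B₂, B₃, B₄, C be five points in ℝ², no three of which are collinear, such that dist(B₁,B₂) = dist(B₂,B₃) = dist(B₃,B₄) = 1 and all other pairwise distances among these five points are at least 1. Then C does not belong to the convex hull of {B₁, B₂, B₃, B₄}. -/

import Mathlib

open Real EuclideanGeometry

/-- The Euclidean plane. -/
abbrev Pt := EuclideanSpace ℝ (Fin 2)

namespace PathHullAux

noncomputable def ori : Orientation ℝ Pt (Fin 2) :=
  (EuclideanSpace.basisFun (Fin 2) ℝ).toBasis.orientation

instance : Fact (Module.finrank ℝ Pt = 2) := ⟨finrank_euclideanSpace_fin⟩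

lemma inner_eq {x y : Pt} (hxy : ‖x - y‖ = 1) :
    2 * (inner ℝ x y : ℝ) = ‖x‖ ^ 2 + ‖y‖ ^ 2 - 1 := by
  have h := norm_sub_sq_real x y
  rw [hxy] at h
  nlinarith [h]

lemma angle_le_pi_div_three {x y : Pt} (hx : 1 ≤ ‖x‖) (hy : 1 ≤ ‖y‖) (hxy : ‖x - y‖ = 1) :
    InnerProductGeometry.angle x y ≤ π / 3 := by
  have hip := inner_eq hxy
  have hx0 : (0:ℝ) < ‖x‖ := by linarith
  have hy0 : (0:ℝ) < ‖y‖ := by linarith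
  have hcos : (1:ℝ)/2 ≤ Real.cos (InnerProductGeometry.angle x y) := by
    rw [InnerProductGeometry.cos_angle, le_div_iff₀ (by positivity)]
    nlinarith [sq_nonneg (‖x‖ - ‖y‖)]
  by_contra h
  push_neg at h
  have h1 : Real.cos (InnerProductGeometry.angle x y) < Real.cos (π/3) := by
    have hπ := Real.pi_pos
    exact Real.strictAntiOn_cos ⟨by positivity, by linarith⟩
      ⟨InnerProductGeometry.angle_nonneg x y, InnerProductGeometry.angle_le_pi x y⟩ h
  rw [Real.cos_pi_div_three] at h1
  linarith

lemma angle_triangle (x y z : Pt) (hx : x ≠ 0) (hy : y ≠ 0) (hz : z ≠ 0) :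
    InnerProductGeometry.angle x z ≤
      InnerProductGeometry.angle x y + InnerProductGeometry.angle y z := by
  rw [ori.angle_eq_abs_oangle_toReal hx hy, ori.angle_eq_abs_oangle_toReal hy hz,
      ori.angle_eq_abs_oangle_toReal hx hz, ← ori.oangle_add hx hy hz]
  set A := (ori.oangle x y).toReal with hA
  set B := (ori.oangle y z).toReal with hB
  rcases le_or_gt π (|A| + |B|) with h | h
  · exact le_trans (Real.Angle.abs_toReal_le_pi _) h
  · have habs : |A + B| < π := lt_of_le_of_lt (abs_add_le A B) h
    have hcoe : ori.oangle x y + ori.oangle y z = ((A + B : ℝ) : Real.Angle) := by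
      rw [Real.Angle.coe_add, hA, hB, Real.Angle.coe_toReal, Real.Angle.coe_toReal]
    rw [hcoe, Real.Angle.toReal_coe_eq_self_iff.2 ⟨by cases abs_lt.1 habs; linarith,
      (abs_lt.1 habs).2.le⟩]
    exact abs_add_le A B

lemma sign_one_bounds {θ : Real.Angle} (h : θ.sign = 1) : 0 < θ.toReal ∧ θ.toReal < π := by
  constructor
  · rcases (Real.Angle.toReal_nonneg_iff_sign_nonneg.2 (by rw [h]; decide)).lt_or_eq with h' | h'
    · exact h'
    · exfalso
      have : θ = 0 := Real.Angle.toReal_eq_zero_iff.1 h'.symm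
      rw [this] at h; simp at h
  · rcases (Real.Angle.toReal_le_pi θ).lt_or_eq with h' | h'
    · exact h'
    · exfalso
      have : θ = π := Real.Angle.toReal_eq_pi_iff.1 h'
      rw [this] at h; simp at h

lemma sign_neg_one_bounds {θ : Real.Angle} (h : θ.sign = -1) : -π < θ.toReal ∧ θ.toReal < 0 :=
  ⟨Real.Angle.neg_pi_lt_toReal θ, Real.Angle.toReal_neg_iff_sign_neg.2 h⟩

/-- Cone additivity of unoriented angles. -/
lemma angle_add_of_cone {x y : Pt} {a c : ℝ} (hx : x ≠ 0) (hy : y ≠ 0)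
    (ha : 0 < a) (hc : 0 < c) (hw : a • x + c • y ≠ 0)
    (hs : (ori.oangle x y).sign ≠ 0) :
    InnerProductGeometry.angle x (a • x + c • y) +
      InnerProductGeometry.angle (a • x + c • y) y = InnerProductGeometry.angle x y := by
  set w := a • x + c • y with hwdef
  have s1 : (ori.oangle x w).sign = (ori.oangle x y).sign := by
    rw [hwdef, ori.oangle_sign_smul_add_smul_right x y a c, sign_pos hc, one_mul]
  have s2 : (ori.oangle w y).sign = (ori.oangle x y).sign := by
    rw [hwdef, ori.oangle_sign_smul_add_smul_left x y a c, sign_pos ha, one_mul]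
  have hadd : ori.oangle x w + ori.oangle w y = ori.oangle x y := ori.oangle_add hx hw hy
  rw [ori.angle_eq_abs_oangle_toReal hx hw, ori.angle_eq_abs_oangle_toReal hw hy,
      ori.angle_eq_abs_oangle_toReal hx hy]
  set A := (ori.oangle x w).toReal with hA
  set B := (ori.oangle w y).toReal with hB
  have hcoe : ori.oangle x y = ((A + B : ℝ) : Real.Angle) := by
    rw [← hadd, Real.Angle.coe_add, hA, hB, Real.Angle.coe_toReal, Real.Angle.coe_toReal]
  have hπ := Real.pi_pos
  cases hsgn : (ori.oangle x y).sign with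
  | neg =>
    have e1 : (ori.oangle x w).sign = -1 := by rw [s1, hsgn]; rfl
    have e2 : (ori.oangle w y).sign = -1 := by rw [s2, hsgn]; rfl
    obtain ⟨hA1, hA2⟩ := sign_neg_one_bounds e1
    obtain ⟨hB1, hB2⟩ := sign_neg_one_bounds e2
    have hle : -π < A + B := by
      by_contra hgt
      push_neg at hgt
      have h2 : (ori.oangle x y).toReal = A + B + 2 * π :=
        hcoe ▸ Real.Angle.toReal_coe_eq_self_add_two_pi_iff.2 ⟨by linarith, by linarith⟩
      have : 0 ≤ (ori.oangle x y).toReal := by rw [h2]; linarith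
      have := Real.Angle.toReal_nonneg_iff_sign_nonneg.1 this
      rw [hsgn] at this
      exact absurd this (by decide)
    have h2 : (ori.oangle x y).toReal = A + B :=
      hcoe ▸ Real.Angle.toReal_coe_eq_self_iff.2 ⟨hle, by linarith⟩
    rw [h2, abs_of_neg hA2, abs_of_neg hB2, abs_of_neg (by linarith : A + B < 0)]
    ring
  | zero => rw [hsgn] at hs; exact absurd rfl hs
  | pos =>
    have e1 : (ori.oangle x w).sign = 1 := by rw [s1, hsgn]; rfl
    have e2 : (ori.oangle w y).sign = 1 := by rw [s2, hsgn]; rfl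
    obtain ⟨hA1, hA2⟩ := sign_one_bounds e1
    obtain ⟨hB1, hB2⟩ := sign_one_bounds e2
    have hle : A + B ≤ π := by
      by_contra hgt
      push_neg at hgt
      have h2 : (ori.oangle x y).toReal = A + B - 2 * π :=
        hcoe ▸ Real.Angle.toReal_coe_eq_self_sub_two_pi_iff.2 ⟨by linarith, by linarith⟩
      have hneg : (ori.oangle x y).toReal < 0 := by rw [h2]; linarith
      have := Real.Angle.toReal_neg_iff_sign_neg.1 hneg
      rw [hsgn] at this
      exact absurd this (by decide)
    have h2 : (ori.oangle x y).toReal = A + B :=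
      hcoe ▸ Real.Angle.toReal_coe_eq_self_iff.2 ⟨by linarith, hle⟩
    rw [h2, abs_of_pos hA1, abs_of_pos hB1, abs_of_pos (by linarith : (0:ℝ) < A + B)]

end PathHullAux

namespace Test

lemma norm_pos_ne {x : Pt} (h : 1 ≤ ‖x‖) : x ≠ 0 := by
  intro h0; rw [h0, norm_zero] at h; linarith

lemma easy_case {v₁ v₂ v₃ : Pt} (h1 : 1 ≤ ‖v₁‖) (h2 : 1 ≤ ‖v₂‖) (h3 : 1 ≤ ‖v₃‖)
    (e12 : ‖v₁ - v₂‖ = 1) (e23 : ‖v₂ - v₃‖ = 1)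
    {a b c : ℝ} (ha : 0 ≤ a) (hb : 0 ≤ b) (hc : 0 ≤ c) (habc : a + b + c = 1)
    (hsum : a • v₁ + b • v₂ + c • v₃ = 0) : False := by
  have i12 := PathHullAux.inner_eq e12
  have i23 := PathHullAux.inner_eq e23
  have hinner : a * (inner ℝ v₁ v₂ : ℝ) + b * (inner ℝ v₂ v₂ : ℝ) + c * (inner ℝ v₃ v₂ : ℝ) = 0 := by
    have := congrArg (fun z : Pt => (inner ℝ z v₂ : ℝ)) hsum
    simpa [inner_add_left, inner_smul_left] using this
  rw [real_inner_self_eq_norm_sq] at hinner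
  rw [real_inner_comm v₃ v₂] at i23
  have j12 : (1:ℝ)/2 ≤ (inner ℝ v₁ v₂ : ℝ) := by nlinarith [sq_nonneg (‖v₁‖ - ‖v₂‖)]
  have j23 : (1:ℝ)/2 ≤ (inner ℝ v₃ v₂ : ℝ) := by nlinarith [sq_nonneg (‖v₂‖ - ‖v₃‖)]
  have hb2 : b * 1 ≤ b * ‖v₂‖^2 := mul_le_mul_of_nonneg_left (by nlinarith) hb
  have ha2 : a * (1/2) ≤ a * (inner ℝ v₁ v₂ : ℝ) := mul_le_mul_of_nonneg_left j12 ha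
  have hc2 : c * (1/2) ≤ c * (inner ℝ v₃ v₂ : ℝ) := mul_le_mul_of_nonneg_left j23 hc
  linarith

end Test

namespace Test2
open PathHullAux Test
local notation "iangle" => InnerProductGeometry.angle

lemma hard_case {v₁ v₂ v₃ v₄ : Pt} (h1 : 1 ≤ ‖v₁‖) (h2 : 1 ≤ ‖v₂‖) (h3 : 1 ≤ ‖v₃‖)
    (h4 : 1 ≤ ‖v₄‖) (e12 : ‖v₁ - v₂‖ = 1) (e23 : ‖v₂ - v₃‖ = 1) (e34 : ‖v₃ - v₄‖ = 1)
    {a b c : ℝ} (ha : 0 ≤ a) (hb : 0 ≤ b) (hc : 0 ≤ c) (habc : a + b + c = 1)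
    (hsum : a • v₁ + b • v₂ + c • v₄ = 0) :
    InnerProductGeometry.angle v₁ v₄ = π := by
  have hv1 : v₁ ≠ 0 := norm_pos_ne h1
  have hv2 : v₂ ≠ 0 := norm_pos_ne h2
  have hv3 : v₃ ≠ 0 := norm_pos_ne h3
  have hv4 : v₄ ≠ 0 := norm_pos_ne h4
  have hπ := Real.pi_pos
  have t12 : iangle v₁ v₂ ≤ π/3 := angle_le_pi_div_three h1 h2 e12
  have t23 : iangle v₂ v₃ ≤ π/3 := angle_le_pi_div_three h2 h3 e23
  have t34 : iangle v₃ v₄ ≤ π/3 := angle_le_pi_div_three h3 h4 e34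
  have t24 : iangle v₂ v₄ ≤ 2*π/3 := by
    have := angle_triangle v₂ v₃ v₄ hv2 hv3 hv4
    linarith
  -- b = 0 case
  rcases eq_or_lt_of_le hb with hb0 | hb0
  · -- a • v₁ + c • v₄ = 0 with a + c = 1
    rw [← hb0, zero_smul, add_zero] at hsum
    have ha0 : a ≠ 0 := by
      rintro rfl
      rw [zero_smul, zero_add] at hsum
      rcases smul_eq_zero.1 hsum with h | h
      · exact absurd (by linarith : c = 0) (by intro h'; rw [h'] at habc; linarith [habc])
      · exact hv4 h
    have hc0 : c ≠ 0 := by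
      rintro rfl
      rw [zero_smul, add_zero] at hsum
      rcases smul_eq_zero.1 hsum with h | h
      · exact absurd h ha0
      · exact hv1 h
    have hveq : v₄ = (-(a/c)) • v₁ := by
      have : c • v₄ = (-a) • v₁ := by
        rw [neg_smul]
        exact eq_neg_of_add_eq_zero_right hsum
      have := congrArg (fun z : Pt => (c⁻¹ : ℝ) • z) this
      simpa [smul_smul, inv_mul_cancel₀ hc0, neg_div, div_eq_inv_mul] using this
    rw [InnerProductGeometry.angle_eq_pi_iff]
    have hap : 0 < a := lt_of_le_of_ne ha (Ne.symm ha0)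
    have hcp : 0 < c := lt_of_le_of_ne hc (Ne.symm hc0)
    exact ⟨hv1, -(a/c), neg_lt_zero.2 (div_pos hap hcp), hveq⟩
  -- now 0 < b
  rcases eq_or_lt_of_le ha with ha0 | ha0
  · exfalso
    rw [← ha0, zero_smul, zero_add] at hsum
    have hc0 : c ≠ 0 := by
      rintro rfl
      rw [zero_smul, add_zero] at hsum
      rcases smul_eq_zero.1 hsum with h | h
      · linarith
      · exact hv2 h
    have hcp : 0 < c := lt_of_le_of_ne hc (Ne.symm hc0)
    have hveq : v₄ = (-(b/c)) • v₂ := by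
      have h' : c • v₄ = (-b) • v₂ := by
        rw [neg_smul]; exact eq_neg_of_add_eq_zero_right hsum
      have := congrArg (fun z : Pt => (c⁻¹ : ℝ) • z) h'
      simpa [smul_smul, inv_mul_cancel₀ hc0, neg_div, div_eq_inv_mul] using this
    have hpi24 : iangle v₂ v₄ = π := InnerProductGeometry.angle_eq_pi_iff.2
      ⟨hv2, -(b/c), neg_lt_zero.2 (div_pos hb0 hcp), hveq⟩
    rw [hpi24] at t24; linarith
  rcases eq_or_lt_of_le hc with hc0 | hc0
  · exfalso
    rw [← hc0, zero_smul, add_zero] at hsum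
    have hveq : v₂ = (-(a/b)) • v₁ := by
      have h' : b • v₂ = (-a) • v₁ := by
        rw [neg_smul]; exact eq_neg_of_add_eq_zero_right hsum
      have := congrArg (fun z : Pt => (b⁻¹ : ℝ) • z) h'
      simpa [smul_smul, inv_mul_cancel₀ (ne_of_gt hb0), neg_div, div_eq_inv_mul] using this
    have hpi12 : iangle v₁ v₂ = π := InnerProductGeometry.angle_eq_pi_iff.2
      ⟨hv1, -(a/b), neg_lt_zero.2 (div_pos ha0 hb0), hveq⟩
    rw [hpi12] at t12; linarith
  -- a, b, c > 0
  by_cases hang : iangle v₁ v₄ = π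
  · exact hang
  have hw : a • v₁ + c • v₄ = -(b • v₂) := by
    rw [eq_neg_iff_add_eq_zero]
    linear_combination (norm := module) hsum
  have hwne : a • v₁ + c • v₄ ≠ 0 := by
    rw [hw, ne_eq, neg_eq_zero, smul_eq_zero]
    push_neg
    exact ⟨ne_of_gt hb0, hv2⟩
  have hs : (ori.oangle v₁ v₄).sign ≠ 0 := by
    intro h0
    rcases ori.eq_zero_or_angle_eq_zero_or_pi_of_sign_oangle_eq_zero h0 with h | h | h | h
    · exact hv1 h
    · exact hv4 h
    · obtain ⟨-, r, hr, hreq⟩ := InnerProductGeometry.angle_eq_zero_iff.1 h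
      have E : (a + c*r) • v₁ + b • v₂ = 0 := by
        rw [hreq] at hsum
        linear_combination (norm := module) hsum
      have hacr : 0 < a + c*r := by nlinarith
      have h' : b • v₂ = (-(a + c*r)) • v₁ := by
        rw [neg_smul]
        exact eq_neg_of_add_eq_zero_right (by linear_combination (norm := module) E)
      have hveq : v₂ = (b⁻¹ * (-(a + c*r))) • v₁ := by
        rw [← smul_smul, ← h', inv_smul_smul₀ (ne_of_gt hb0)]
      have hpi12 : iangle v₁ v₂ = π := InnerProductGeometry.angle_eq_pi_iff.2
        ⟨hv1, b⁻¹ * (-(a + c*r)),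
          mul_neg_of_pos_of_neg (inv_pos.2 hb0) (by linarith), hveq⟩
      rw [hpi12] at t12; linarith
    · exact hang h
  have hcone := angle_add_of_cone hv1 hv4 ha0 hc0 hwne hs
  have q1 : iangle v₁ (a • v₁ + c • v₄) = π - iangle v₁ v₂ := by
    rw [hw, ← neg_smul, InnerProductGeometry.angle_smul_right_of_neg _ _ (neg_lt_zero.2 hb0),
      InnerProductGeometry.angle_neg_right]
  have q2 : iangle (a • v₁ + c • v₄) v₄ = π - iangle v₂ v₄ := by
    rw [hw, ← neg_smul, InnerProductGeometry.angle_smul_left_of_neg _ _ (neg_lt_zero.2 hb0),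
      InnerProductGeometry.angle_neg_left]
  have hge : π ≤ iangle v₁ v₄ := by
    rw [← hcone, q1, q2]
    linarith
  exact le_antisymm (InnerProductGeometry.angle_le_pi _ _) hge

end Test2

namespace Test3
open PathHullAux Test Test2

lemma coeffs_of_mem_hull {P Q R C : Pt} (h : C ∈ convexHull ℝ ({P, Q, R} : Set Pt)) :
    ∃ a b c : ℝ, 0 ≤ a ∧ 0 ≤ b ∧ 0 ≤ c ∧ a + b + c = 1 ∧
      a • (P - C) + b • (Q - C) + c • (R - C) = 0 := by
  rw [show ({P, Q, R} : Set Pt) = insert P {Q, R} from rfl,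
    convexHull_insert ⟨Q, by simp⟩] at h
  obtain ⟨z, hz, h2⟩ := Set.mem_iUnion₂.1 h
  rw [Set.mem_singleton_iff] at hz
  obtain ⟨w, hw, hseg⟩ := Set.mem_iUnion₂.1 h2
  rw [convexHull_pair] at hw
  obtain ⟨b', c', hb', hc', hbc', rfl⟩ := hw
  obtain ⟨a, t, ha, ht, hat, hC⟩ := hseg
  rw [hz] at hC
  refine ⟨a, t * b', t * c', ha, mul_nonneg ht hb', mul_nonneg ht hc', by nlinarith, ?_⟩
  have hC' : a • P + (t * b') • Q + (t * c') • R = C := by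
    rw [← hC]; module
  have hsum1 : a + t * b' + t * c' = 1 := by nlinarith
  linear_combination (norm := module) hC' - hsum1 • C

lemma collinear_of_angle_pi {B₁ B₄ C : Pt}
    (h : InnerProductGeometry.angle (B₁ - C) (B₄ - C) = π) :
    Collinear ℝ ({B₁, B₄, C} : Set Pt) := by
  obtain ⟨h1, r, hr, heq⟩ := InnerProductGeometry.angle_eq_pi_iff.1 h
  rw [collinear_iff_of_mem (show C ∈ ({B₁, B₄, C} : Set Pt) by simp)]
  refine ⟨B₁ - C, ?_⟩
  rintro p hp
  simp only [Set.mem_insert_iff, Set.mem_singleton_iff] at hp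
  rcases hp with rfl | rfl | rfl
  · exact ⟨1, by simp [vadd_eq_add]⟩
  · exact ⟨r, by rw [← heq]; simp [vadd_eq_add]⟩
  · exact ⟨0, by simp [vadd_eq_add]⟩

end Test3

open PathHullAux Test Test2 Test3

/-- The convex hull of a unit path `B₁ B₂ B₃ B₄` contains no further point: if five
points have no three collinear, all pairwise distances at least 1, and
`dist B₁ B₂ = dist B₂ B₃ = dist B₃ B₄ = 1`, then `C` is outside the convex hull of
`{B₁, B₂, B₃, B₄}`. -/
theorem convex_hull_of_path_empty (B₁ B₂ B₃ B₄ C : Pt)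
    (hne : List.Pairwise (· ≠ ·) [B₁, B₂, B₃, B₄, C])
    (hcol : ∀ p ∈ ({B₁, B₂, B₃, B₄, C} : Set Pt),
      ∀ q ∈ ({B₁, B₂, B₃, B₄, C} : Set Pt),
      ∀ r ∈ ({B₁, B₂, B₃, B₄, C} : Set Pt),
      p ≠ q → p ≠ r → q ≠ r → ¬ Collinear ℝ ({p, q, r} : Set Pt))
    (h12 : dist B₁ B₂ = 1) (h23 : dist B₂ B₃ = 1) (h34 : dist B₃ B₄ = 1)
    (hge : ∀ p ∈ ({B₁, B₂, B₃, B₄, C} : Set Pt),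
      ∀ q ∈ ({B₁, B₂, B₃, B₄, C} : Set Pt), p ≠ q → 1 ≤ dist p q) :
    C ∉ convexHull ℝ ({B₁, B₂, B₃, B₄} : Set Pt) := by
  classical
  intro hC
  simp only [List.pairwise_cons, List.mem_cons, List.not_mem_nil, List.mem_singleton,
    List.Pairwise.nil, forall_eq_or_imp, forall_eq, or_false, and_true] at hne
  obtain ⟨⟨n12, n13, n14, n1C⟩, ⟨n23, n24, n2C⟩, ⟨n34, n3C⟩, n4C, -⟩ := hne
  have m1 : B₁ ∈ ({B₁, B₂, B₃, B₄, C} : Set Pt) := by simp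
  have m2 : B₂ ∈ ({B₁, B₂, B₃, B₄, C} : Set Pt) := by simp
  have m3 : B₃ ∈ ({B₁, B₂, B₃, B₄, C} : Set Pt) := by simp
  have m4 : B₄ ∈ ({B₁, B₂, B₃, B₄, C} : Set Pt) := by simp
  have mC : C ∈ ({B₁, B₂, B₃, B₄, C} : Set Pt) := by simp
  -- norms of the vectors from C
  have hn1 : 1 ≤ ‖B₁ - C‖ := by rw [← dist_eq_norm]; exact hge B₁ m1 C mC n1C
  have hn2 : 1 ≤ ‖B₂ - C‖ := by rw [← dist_eq_norm]; exact hge B₂ m2 C mC n2C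
  have hn3 : 1 ≤ ‖B₃ - C‖ := by rw [← dist_eq_norm]; exact hge B₃ m3 C mC n3C
  have hn4 : 1 ≤ ‖B₄ - C‖ := by rw [← dist_eq_norm]; exact hge B₄ m4 C mC n4C
  have e12 : ‖(B₁ - C) - (B₂ - C)‖ = 1 := by
    rw [sub_sub_sub_cancel_right, ← dist_eq_norm]; exact h12
  have e23 : ‖(B₂ - C) - (B₃ - C)‖ = 1 := by
    rw [sub_sub_sub_cancel_right, ← dist_eq_norm]; exact h23
  have e34 : ‖(B₃ - C) - (B₄ - C)‖ = 1 := by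
    rw [sub_sub_sub_cancel_right, ← dist_eq_norm]; exact h34
  have e21 : ‖(B₂ - C) - (B₁ - C)‖ = 1 := by
    rw [sub_sub_sub_cancel_right, ← dist_eq_norm, dist_comm]; exact h12
  have e32 : ‖(B₃ - C) - (B₂ - C)‖ = 1 := by
    rw [sub_sub_sub_cancel_right, ← dist_eq_norm, dist_comm]; exact h23
  have e43 : ‖(B₄ - C) - (B₃ - C)‖ = 1 := by
    rw [sub_sub_sub_cancel_right, ← dist_eq_norm, dist_comm]; exact h34
  -- the final contradiction once ∠ B₁ C B₄ = π
  have hfin : InnerProductGeometry.angle (B₁ - C) (B₄ - C) = π → False := fun hpi =>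
    hcol B₁ m1 B₄ m4 C mC n14 n1C n4C (collinear_of_angle_pi hpi)
  -- Carathéodory
  rw [convexHull_eq_union] at hC
  simp only [Set.mem_iUnion, exists_prop] at hC
  obtain ⟨t, hts, hai, hct⟩ := hC
  have hcard : t.card ≤ 3 := by
    have h1 := hai.card_le_finrank_succ
    have h2 := Submodule.finrank_le (vectorSpan ℝ (Set.range (Subtype.val : ↥t → Pt)))
    rw [Fintype.card_coe] at h1
    have h3 : Module.finrank ℝ Pt = 2 := finrank_euclideanSpace_fin
    omega
  have hmiss : B₁ ∉ t ∨ B₂ ∉ t ∨ B₃ ∉ t ∨ B₄ ∉ t := by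
    by_contra h
    push_neg at h
    obtain ⟨k1, k2, k3, k4⟩ := h
    have hsub4 : ({B₁, B₂, B₃, B₄} : Finset Pt) ⊆ t := by
      intro x hx
      simp only [Finset.mem_insert, Finset.mem_singleton] at hx
      rcases hx with rfl | rfl | rfl | rfl <;> assumption
    have hc4 : ({B₁, B₂, B₃, B₄} : Finset Pt).card = 4 := by
      rw [Finset.card_insert_of_notMem (by simp [n12, n13, n14]),
          Finset.card_insert_of_notMem (by simp [n23, n24]),
          Finset.card_insert_of_notMem (by simp [n34]), Finset.card_singleton]
    have := Finset.card_le_card hsub4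
    omega
  rcases hmiss with hm | hm | hm | hm
  · -- B₁ missing : triangle B₂ B₃ B₄, easy (reversed)
    have hsub : (↑t : Set Pt) ⊆ {B₂, B₃, B₄} := by
      intro x hx
      have := hts hx
      simp only [Set.mem_insert_iff, Set.mem_singleton_iff] at this ⊢
      rcases this with rfl | rfl | rfl | rfl
      · exact absurd hx hm
      · tauto
      · tauto
      · tauto
    obtain ⟨a, b, c, ha, hb, hc, habc, hsum⟩ :=
      coeffs_of_mem_hull (convexHull_mono hsub hct)
    exact easy_case hn4 hn3 hn2 e43 e32 hc hb ha (by linarith)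
      (by linear_combination (norm := module) hsum)
  · -- B₂ missing : triangle B₁ B₃ B₄, hard (reversed)
    have hsub : (↑t : Set Pt) ⊆ {B₁, B₃, B₄} := by
      intro x hx
      have := hts hx
      simp only [Set.mem_insert_iff, Set.mem_singleton_iff] at this ⊢
      rcases this with rfl | rfl | rfl | rfl
      · tauto
      · exact absurd hx hm
      · tauto
      · tauto
    obtain ⟨a, b, c, ha, hb, hc, habc, hsum⟩ :=
      coeffs_of_mem_hull (convexHull_mono hsub hct)
    have hpi := hard_case hn4 hn3 hn2 hn1 e43 e32 e21 hc hb ha (by linarith)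
      (by linear_combination (norm := module) hsum)
    rw [InnerProductGeometry.angle_comm] at hpi
    exact hfin hpi
  · -- B₃ missing : triangle B₁ B₂ B₄, hard
    have hsub : (↑t : Set Pt) ⊆ {B₁, B₂, B₄} := by
      intro x hx
      have := hts hx
      simp only [Set.mem_insert_iff, Set.mem_singleton_iff] at this ⊢
      rcases this with rfl | rfl | rfl | rfl
      · tauto
      · tauto
      · exact absurd hx hm
      · tauto
    obtain ⟨a, b, c, ha, hb, hc, habc, hsum⟩ :=
      coeffs_of_mem_hull (convexHull_mono hsub hct)
    exact hfin (hard_case hn1 hn2 hn3 hn4 e12 e23 e34 ha hb hc habc hsum)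
  · -- B₄ missing : triangle B₁ B₂ B₃, easy
    have hsub : (↑t : Set Pt) ⊆ {B₁, B₂, B₃} := by
      intro x hx
      have := hts hx
      simp only [Set.mem_insert_iff, Set.mem_singleton_iff] at this ⊢
      rcases this with rfl | rfl | rfl | rfl
      · tauto
      · tauto
      · tauto
      · exact absurd hx hm
    obtain ⟨a, b, c, ha, hb, hc, habc, hsum⟩ :=
      coeffs_of_mem_hull (convexHull_mono hsub hct)
    exact easy_case hn1 hn2 hn3 e12 e23 ha hb hc habc hsum
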